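/- Let L ⊆ L' be first-order languages with L' an expansion of L, let M' be an L'-structure, and let M denote the reduct of M' to L. Suppose U ⊆ M' generates M' as an L'-structure, U is irredundant in M' (for every u ∈ U, u does not belong to the L'-substructure of M' generated by U ∖ {u}), and |U| = κ is an infinite cardinal. Let K be a set of L'-terms with |K| ≤ κ, and set K*U = U ∪ { t^{M'}(ū) : t ∈ K, ū a tuple from U }. Then the L-structure Sg^M(K*U) is strictly κ-generated. -/

import Mathlib

open FirstOrder Language Cardinal

universe u

/-- `X` generates the `L`-structure `M`: the substructure generated by `X` is all of `M`. -/
def Generates (L : FirstOrder.Language.{u, u}) (M : Type u) [L.Structure M] (X : Set M) : Prop :=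
  Substructure.closure L X = ⊤

/-- `M` is `μ`-generated: it is generated by a set of cardinality `μ`. -/
def IsGenerated (L : FirstOrder.Language.{u, u}) (M : Type u) [L.Structure M]
    (μ : Cardinal.{u}) : Prop :=
  ∃ X : Set M, #X = μ ∧ Generates L M X

/-- `M` is strictly `μ`-generated: it is `μ`-generated but not `ν`-generated for any `ν < μ`. -/
def StrictlyGenerated (L : FirstOrder.Language.{u, u}) (M : Type u) [L.Structure M]
    (μ : Cardinal.{u}) : Prop :=
  IsGenerated L M μ ∧ ∀ ν < μ, ¬ IsGenerated L M ν

/-- `K*V`: the set `V` together with all values of terms from `K` at tuples from `V`. -/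
def KStarSet {L' : FirstOrder.Language.{u, u}} (M : Type u) [L'.Structure M]
    (K : Set (Σ n, L'.Term (Fin n))) (V : Set M) : Set M :=
  V ∪ {x | ∃ t ∈ K, ∃ v : Fin t.1 → ↥V, x = t.2.realize fun i => (v i : M)}

/-- Every element of a closure lies in the closure of a finite subset. -/
lemma aux_mem_closure_finite {L : FirstOrder.Language.{u, u}} {M : Type u} [L.Structure M]
    {s : Set M} {x : M} (h : x ∈ Substructure.closure L s) :
    ∃ w : Set M, w ⊆ s ∧ w.Finite ∧ x ∈ Substructure.closure L w := by
  refine Substructure.closure_induction h (fun x hx =>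
    ⟨{x}, Set.singleton_subset_iff.2 hx, Set.finite_singleton x,
      Substructure.subset_closure rfl⟩) ?_
  intro n f x hx
  choose w hws hwf hwx using hx
  refine ⟨⋃ i, w i, Set.iUnion_subset hws, Set.finite_iUnion hwf, ?_⟩
  exact Substructure.fun_mem _ f x fun i =>
    Substructure.closure_mono (Set.subset_iUnion w i) (hwx i)

/-- The `L`-closure is contained in the `L'`-closure for expansions. -/
lemma aux_closure_subset {L L' : FirstOrder.Language.{u, u}} (φ : L →ᴸ L') {M : Type u}
    [L.Structure M] [L'.Structure M] [φ.IsExpansionOn M] (s : Set M) :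
    (Substructure.closure L s : Set M) ⊆ (Substructure.closure L' s : Set M) := by
  have h : Substructure.closure L s ≤ φ.substructureReduct (Substructure.closure L' s) :=
    Substructure.closure_le.2 (by
      rw [LHom.coe_substructureReduct]
      exact Substructure.subset_closure)
  exact fun x hx => (LHom.mem_substructureReduct φ).1 (h hx)

/-- The preimage of a generating set generates the closure. -/
lemma aux_closure_preimage_top {L : FirstOrder.Language.{u, u}} {M : Type u} [L.Structure M]
    (s : Set M) :
    Substructure.closure L
      ((Subtype.val ⁻¹' s : Set (Substructure.closure L s))) = ⊤ := by
  rw [eq_top_iff]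
  rintro ⟨x, hx⟩ -
  have himg : ((Substructure.closure L s).subtype.toHom) ''
      (Subtype.val ⁻¹' s : Set (Substructure.closure L s)) = s := by
    have : ((Substructure.closure L s).subtype.toHom : ↥(Substructure.closure L s) → M)
        = Subtype.val := by
      ext y; simp [Substructure.coe_subtype]
    rw [this]
    exact Set.image_preimage_eq_of_subset (by
      rw [Subtype.range_coe]; exact Substructure.subset_closure)
  have h2 : x ∈ (Substructure.closure L
      (Subtype.val ⁻¹' s : Set (Substructure.closure L s))).map
      (Substructure.closure L s).subtype.toHom := by
    rw [Substructure.map_closure, himg]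
    exact hx
  obtain ⟨y, hy, hval⟩ := h2
  have : y = ⟨x, hx⟩ := Subtype.ext (by simpa [Substructure.coe_subtype] using hval)
  exact this ▸ hy

/-- If `U` generates `M'` as an `L'`-structure, `U` is irredundant in `M'`, `|U| = κ ≥ ℵ₀`,
and `K` is a set of `L'`-terms with `|K| ≤ κ`, then the `L`-structure `Sg^M(K*U)` is strictly
`κ`-generated. -/
theorem stmt9 {L L' : FirstOrder.Language.{u, u}} (φ : L →ᴸ L') (M : Type u)
    [L.Structure M] [L'.Structure M] [φ.IsExpansionOn M]
    (U : Set M)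
    (hUgen : Substructure.closure L' U = ⊤)
    (hUirr : ∀ u ∈ U, u ∉ Substructure.closure L' (U \ {u}))
    (κ : Cardinal.{u}) (hκ : ℵ₀ ≤ κ) (hU : #U = κ)
    (K : Set (Σ n, L'.Term (Fin n))) (hK : #K ≤ κ) :
    StrictlyGenerated L (↥(Substructure.closure L (KStarSet M K U))) κ := by
  classical
  have hsub : U ⊆ KStarSet M K U := Set.subset_union_left
  have hKsub : KStarSet M K U ⊆ Substructure.closure L (KStarSet M K U) :=
    Substructure.subset_closure
  -- cardinality of KStarSet
  have hcard : #(KStarSet M K U) = κ := by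
    apply le_antisymm
    · refine (mk_union_le _ _).trans ?_
      have h2 : #({x | ∃ t ∈ K, ∃ v : Fin t.1 → ↥U,
          x = t.2.realize fun i => (v i : M)} : Set M) ≤ κ := by
        have hEq : ({x | ∃ t ∈ K, ∃ v : Fin t.1 → ↥U,
            x = t.2.realize fun i => (v i : M)} : Set M) ⊆
            ⋃ t : K, Set.range (fun v : Fin (t : Σ n, L'.Term (Fin n)).1 → ↥U =>
              ((t : Σ n, L'.Term (Fin n)).2.realize fun i => (v i : M))) := by
          rintro x ⟨t, ht, v, rfl⟩
          exact Set.mem_iUnion.2 ⟨⟨t, ht⟩, ⟨v, rfl⟩⟩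
        refine (mk_le_mk_of_subset hEq).trans ((mk_iUnion_le _).trans ?_)
        have hsup : ⨆ t : K, #(Set.range (fun v : Fin (t : Σ n, L'.Term (Fin n)).1 → ↥U =>
            ((t : Σ n, L'.Term (Fin n)).2.realize fun i => (v i : M)))) ≤ κ := by
          refine ciSup_le' fun t => mk_range_le.trans ?_
          rw [Cardinal.mk_arrow, Cardinal.lift_uzero, Cardinal.lift_mk_fin, hU,
            Cardinal.power_natCast]
          exact Cardinal.power_nat_le hκ
        calc #↥K * ⨆ t : K, #(Set.range _) ≤ κ * κ := mul_le_mul' hK hsup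
          _ = κ := mul_eq_self hκ
      calc #↥U + _ ≤ κ + κ := add_le_add hU.le h2
        _ = κ := add_eq_self hκ
    · rw [← hU]; exact mk_le_mk_of_subset hsub
  constructor
  · -- κ-generated
    refine ⟨Subtype.val ⁻¹' (KStarSet M K U), ?_, aux_closure_preimage_top _⟩
    exact (Cardinal.mk_preimage_of_injective_of_subset_range Subtype.val (KStarSet M K U)
      Subtype.coe_injective (fun x hx => ⟨⟨x, hKsub hx⟩, rfl⟩)).trans hcard
  · -- not ν-generated for ν < κ
    rintro ν hν ⟨X, hX, hgenX⟩
    have hmemU : ∀ y : ↥X, ((y : ↥(Substructure.closure L (KStarSet M K U))) : M) ∈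
        Substructure.closure L' U := by
      intro y; rw [hUgen]; trivial
    choose w hws hwf hwx using fun y => aux_mem_closure_finite (hmemU y)
    set W : Set M := ⋃ y, w y with hW
    have hWU : W ⊆ U := Set.iUnion_subset hws
    have hXW : ∀ y : ↥X, ((y : ↥(Substructure.closure L (KStarSet M K U))) : M) ∈
        Substructure.closure L' W := fun y =>
      Substructure.closure_mono (Set.subset_iUnion w y) (hwx y)
    have hUW : ∀ u ∈ U, u ∈ Substructure.closure L' W := by
      intro u hu
      have huS : u ∈ Substructure.closure L (KStarSet M K U) := hKsub (hsub hu)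
      have hmem : (⟨u, huS⟩ : ↥(Substructure.closure L (KStarSet M K U))) ∈
          Substructure.closure L X := by rw [hgenX]; trivial
      have h2 : u ∈ Substructure.closure L (Subtype.val '' X) := by
        have hcoe : (((Substructure.closure L (KStarSet M K U)).subtype.toHom :
            ↥(Substructure.closure L (KStarSet M K U)) → M)) = Subtype.val :=
          funext fun y => by simp [Substructure.coe_subtype]
        have hmap : u ∈ (Substructure.closure L X).map
            (Substructure.closure L (KStarSet M K U)).subtype.toHom :=
          ⟨⟨u, huS⟩, hmem, rfl⟩
        rwa [Substructure.map_closure, hcoe] at hmap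
      have h3 : u ∈ (Substructure.closure L' (Subtype.val '' X) : Set M) :=
        aux_closure_subset φ _ h2
      have h4 : Substructure.closure L' (Subtype.val '' X) ≤ Substructure.closure L' W :=
        Substructure.closure_le.2 (by rintro _ ⟨y, hy, rfl⟩; exact hXW ⟨y, hy⟩)
      exact h4 h3
    have hWcard : #W < κ := by
      rcases lt_or_ge ν ℵ₀ with hν' | hν'
      · have hXfin : Finite ↥X := by
          rw [← Cardinal.mk_lt_aleph0_iff, hX]; exact hν'
        have hWfin : W.Finite := Set.finite_iUnion hwf
        exact lt_of_lt_of_le hWfin.lt_aleph0 hκ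
      · have h1 : #W ≤ #↥X * ⨆ y, #(w y) := mk_iUnion_le w
        have h2 : (⨆ y : ↥X, #(w y)) ≤ ℵ₀ := ciSup_le' fun y => (hwf y).lt_aleph0.le
        calc #W ≤ #↥X * ⨆ y, #(w y) := h1
          _ ≤ ν * ℵ₀ := by rw [hX]; exact mul_le_mul' le_rfl h2
          _ ≤ ν * ν := mul_le_mul' le_rfl hν'
          _ = ν := mul_eq_self hν'
          _ < κ := hν
    have hUnotsub : ¬ U ⊆ W := by
      intro h
      exact absurd (hU ▸ mk_le_mk_of_subset h) hWcard.not_ge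
    obtain ⟨u, huU, huW⟩ := Set.not_subset.1 hUnotsub
    refine hUirr u huU ?_
    have hWsub : W ⊆ U \ {u} := fun x hx =>
      ⟨hWU hx, fun hxu => huW (Set.mem_singleton_iff.1 hxu ▸ hx)⟩
    exact Substructure.closure_mono hWsub (hUW u huU)
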